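/- Let (U,F,t) be a Set Cover instance in which every element belongs to exactly d ≥ 3 sets. If the depth-2 gerrymandering instance constructed from (U,F,t) admits a district-partition into k = t+3 districts that is satisfying for the preferred candidate p, then there exists X ⊆ F with |X| ≤ t and ∪_{S∈X} S = U. -/
import Mathlib


attribute [local instance] Classical.propDecidable

/-- Candidate `c` *leads* district `D` (unweighted): `c`'s vote count is at least that of
every candidate. -/
def leadsIn {V C : Type*} (χ : V → C) (c : C) (D : Finset V) : Prop :=
  ∀ c' : C, (D.filter fun x => χ x = c').card ≤ (D.filter fun x => χ x = c).card

/-- Candidate `c` *wins* district `D` (unweighted): `c`'s vote count strictly exceeds that of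
every other candidate. -/
def winsIn {V C : Type*} (χ : V → C) (c : C) (D : Finset V) : Prop :=
  ∀ c' : C, c' ≠ c → (D.filter fun x => χ x = c').card < (D.filter fun x => χ x = c).card

/-- A district-partition of `G` into `k` districts: `k` pairwise-disjoint nonempty vertex sets
covering all vertices, each inducing a connected subgraph. -/
def IsDistrictPartition {V : Type*} (G : SimpleGraph V) (k : ℕ) (P : Finset (Finset V)) : Prop :=
  P.card = k ∧ (∀ D ∈ P, D.Nonempty) ∧
    (∀ D ∈ P, ∀ D' ∈ P, D ≠ D' → Disjoint D D') ∧
    (∀ x : V, ∃ D ∈ P, x ∈ D) ∧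
    (∀ D ∈ P, (G.induce (D : Set V)).Connected)

/-- A district-partition is *satisfying* for the preferred candidate `p` if `p` wins strictly
more districts than any other candidate leads. -/
def SatisfyingFor {V C : Type*} (χ : V → C) (p : C) (P : Finset (Finset V)) : Prop :=
  ∀ q : C, q ≠ p →
    (P.filter fun D => leadsIn χ q D).card < (P.filter fun D => winsIn χ p D).card

/-- Vertices of the depth-2 gerrymandering instance: the root `r`, weight-branch vertices
`w_i, w'_i` for `i ∈ [d]`, set-branch vertices `s_i, s'_i` for `i ∈ [m]`, and element leaves
`v^j_l` for `j ∈ [n]`, `l ∈ [d]`. -/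
inductive V2 (n m d : ℕ) : Type where
  | root
  | w (i : Fin d)
  | w' (i : Fin d)
  | s (i : Fin m)
  | s' (i : Fin m)
  | v (j : Fin n) (l : Fin d)
  deriving DecidableEq, Fintype

/-- Candidates of the depth-2 instance: preferred candidate `p`, adversary `q`,
element candidates `a_j`, and set candidates `b_i`. -/
inductive C2 (n m : ℕ) : Type where
  | p
  | q
  | a (j : Fin n)
  | b (i : Fin m)
  deriving DecidableEq

/-- Candidate preferences of the depth-2 instance. -/
def chi2 {n m d : ℕ} : V2 n m d → C2 n m
  | .root => .p
  | .w _ => .p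
  | .w' _ => .q
  | .s i => .b i
  | .s' i => .b i
  | .v j _ => .a j

/-- The depth-2 tree: the root is adjacent to each `w_i` and each `s_i`; `w'_i` is attached to
`w_i`; `s'_i` is attached to `s_i`; and the leaf `v^j_l` is attached to `s_{att j l}`, where
`att j` enumerates (bijectively) the sets containing element `e_j`. -/
def G2 {n m d : ℕ} (att : Fin n → Fin d → Fin m) : SimpleGraph (V2 n m d) :=
  SimpleGraph.fromRel (fun x y =>
    (x = V2.root ∧ ∃ i, y = V2.w i) ∨
    (∃ i, x = V2.w i ∧ y = V2.w' i) ∨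
    (x = V2.root ∧ ∃ i, y = V2.s i) ∨
    (∃ i, x = V2.s i ∧ y = V2.s' i) ∨
    (∃ j l, x = V2.s (att j l) ∧ y = V2.v j l))

/-- branch function -/
def beta {n m d : ℕ} (att : Fin n → Fin d → Fin m) : V2 n m d → Option (Fin d ⊕ Fin m)
  | .root => none
  | .w i => some (.inl i)
  | .w' i => some (.inl i)
  | .s i => some (.inr i)
  | .s' i => some (.inr i)
  | .v j l => some (.inr (att j l))

lemma adj_beta {n m d : ℕ} (att : Fin n → Fin d → Fin m) {x y : V2 n m d}
    (h : (G2 att).Adj x y) :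
    x = V2.root ∨ y = V2.root ∨ beta att x = beta att y := by
  rw [G2, SimpleGraph.fromRel_adj] at h
  obtain ⟨-, h | h⟩ := h <;>
    rcases h with ⟨h1, i, h2⟩ | ⟨i, h1, h2⟩ | ⟨h1, i, h2⟩ | ⟨i, h1, h2⟩ | ⟨j, l, h1, h2⟩ <;>
    subst h1 <;> subst h2 <;> simp [beta]

lemma adj_w' {n m d : ℕ} (att : Fin n → Fin d → Fin m) {x : V2 n m d} {i : Fin d}
    (h : (G2 att).Adj x (V2.w' i)) : x = V2.w i := by
  rw [G2, SimpleGraph.fromRel_adj] at h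
  obtain ⟨-, h | h⟩ := h <;>
    rcases h with ⟨h1, i', h2⟩ | ⟨i', h1, h2⟩ | ⟨h1, i', h2⟩ | ⟨i', h1, h2⟩ | ⟨j, l, h1, h2⟩ <;>
    simp_all

lemma beta_const_of_reachable {n m d : ℕ} {att : Fin n → Fin d → Fin m} {D : Set (V2 n m d)}
    (hroot : V2.root ∉ D) {x y : D}
    (h : ((G2 att).induce D).Reachable x y) : beta att x.1 = beta att y.1 := by
  obtain ⟨wk⟩ := h
  induction wk with
  | nil => rfl
  | @cons u a b hadj p ih =>
    have hadj' : (G2 att).Adj u.1 a.1 := hadj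
    rcases adj_beta att hadj' with h1 | h1 | h1
    · exact absurd (h1 ▸ u.2) hroot
    · exact absurd (h1 ▸ a.2) hroot
    · exact h1.trans ih

lemma beta_inl_cases {n m d : ℕ} (att : Fin n → Fin d → Fin m) {x : V2 n m d} {i : Fin d}
    (h : beta att x = some (Sum.inl i)) : x = V2.w i ∨ x = V2.w' i := by
  cases x <;> simp_all [beta]

lemma w_mem_of_w'_mem {n m d : ℕ} {att : Fin n → Fin d → Fin m} {R : Finset (V2 n m d)}
    (hconn : ((G2 att).induce (R : Set (V2 n m d))).Connected)
    (hr : V2.root ∈ R) {i : Fin d} (hw' : V2.w' i ∈ R) : V2.w i ∈ R := by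
  have hreach := hconn.preconnected ⟨V2.w' i, by simpa using hw'⟩ ⟨V2.root, by simpa using hr⟩
  obtain ⟨wk⟩ := hreach
  cases wk with
  | @cons a b c hadj p =>
    have hadj' : (G2 att).Adj (V2.w' i) b.1 := hadj
    have : b.1 = V2.w i := adj_w' att hadj'.symm
    have hb := b.2
    rw [this] at hb
    simpa using hb


lemma chi2_p_cases {n m d : ℕ} {x : V2 n m d} (h : chi2 x = C2.p) :
    x = V2.root ∨ ∃ i, x = V2.w i := by
  cases x <;> simp_all [chi2]

/-- vote count of candidate `c` in district `D` -/
noncomputable def cnt {V C : Type*} (χ : V → C) (c : C) (D : Finset V) : ℕ :=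
  (D.filter fun x => χ x = c).card

lemma leadsIn_iff {V C : Type*} (χ : V → C) (c : C) (D : Finset V) :
    leadsIn χ c D ↔ ∀ c' : C, cnt χ c' D ≤ cnt χ c D := Iff.rfl

lemma winsIn_iff {V C : Type*} (χ : V → C) (c : C) (D : Finset V) :
    winsIn χ c D ↔ ∀ c' : C, c' ≠ c → cnt χ c' D < cnt χ c D := Iff.rfl

lemma one_le_cnt {V C : Type*} (χ : V → C) {c : C} {D : Finset V} {x : V}
    (hx : x ∈ D) (hc : χ x = c) : 1 ≤ cnt χ c D :=
  Finset.card_pos.mpr ⟨x, Finset.mem_filter.mpr ⟨hx, hc⟩⟩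

lemma cnt_le_card {V C : Type*} (χ : V → C) {c : C} {D : Finset V} {s : Finset V}
    (h : ∀ x ∈ D, χ x = c → x ∈ s) : cnt χ c D ≤ s.card := by
  apply Finset.card_le_card
  intro x hx
  obtain ⟨h1, h2⟩ := Finset.mem_filter.mp hx
  exact h x h1 h2

lemma cnt_eq_zero {V C : Type*} (χ : V → C) {c : C} {D : Finset V}
    (h : ∀ x ∈ D, χ x ≠ c) : cnt χ c D = 0 := by
  rw [cnt, Finset.card_eq_zero]
  ext x
  simp only [Finset.mem_filter, Finset.notMem_empty, iff_false, not_and]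
  exact h x

lemma exists_of_cnt_pos {V C : Type*} (χ : V → C) {c : C} {D : Finset V}
    (h : 0 < cnt χ c D) : ∃ x ∈ D, χ x = c := by
  obtain ⟨x, hx⟩ := Finset.card_pos.mp h
  exact ⟨x, (Finset.mem_filter.mp hx).1, (Finset.mem_filter.mp hx).2⟩

lemma card_le_cnt {V C ι : Type*} (χ : V → C) {c : C} {D : Finset V} (s : Finset ι)
    (f : ι → V) (hmem : ∀ x ∈ s, f x ∈ D ∧ χ (f x) = c) (hinj : Set.InjOn f s) :
    s.card ≤ cnt χ c D :=
  Finset.card_le_card_of_injOn f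
    (fun x hx => Finset.mem_filter.mpr ⟨(hmem x hx).1, (hmem x hx).2⟩) hinj

lemma leads_pair {n m d : ℕ} {i : Fin d} {D : Finset (V2 n m d)}
    (hsub : D ⊆ {V2.w i, V2.w' i}) (hmem : V2.w' i ∈ D) : leadsIn chi2 C2.q D := by
  rw [leadsIn_iff]
  intro c'
  have h1 : 1 ≤ cnt chi2 C2.q D := one_le_cnt chi2 hmem rfl
  by_cases hc : c' = C2.q
  · subst hc; exact le_refl _
  · have h2 : cnt chi2 c' D ≤ ({V2.w i} : Finset (V2 n m d)).card := by
      apply cnt_le_card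
      intro x hx hxc
      rcases Finset.mem_insert.mp (hsub hx) with rfl | hx1
      · exact Finset.mem_singleton_self _
      · rw [Finset.mem_singleton] at hx1; subst hx1
        simp only [chi2] at hxc
        exact (hc hxc.symm).elim
    simpa using h2.trans h1

/-- backward direction of Theorem 1.  Let `(U, F, t)` be a Set Cover
instance in which every element belongs to exactly `d ≥ 3` sets.  If the depth-2
gerrymandering instance constructed from `(U, F, t)` admits a district-partition into
`k = t + 3` districts that is satisfying for the preferred candidate `p`, then there exists
`X ⊆ F` with `|X| ≤ t` and `∪_{S ∈ X} S = U`. -/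
theorem depth2_gerrymander_imp_cover (n m d t : ℕ) (hd : 3 ≤ d) (htm : t ≤ m)
    (S : Fin m → Finset (Fin n))
    (hfreq : ∀ j : Fin n, (Finset.univ.filter fun i => j ∈ S i).card = d)
    (att : Fin n → Fin d → Fin m)
    (hattmem : ∀ j l, j ∈ S (att j l))
    (hattinj : ∀ j, Function.Injective (att j))
    (hgerry : ∃ P : Finset (Finset (V2 n m d)),
      IsDistrictPartition (G2 att) (t + 3) P ∧ SatisfyingFor chi2 C2.p P) :
    ∃ X : Finset (Fin m), X.card ≤ t ∧ ∀ j : Fin n, ∃ i ∈ X, j ∈ S i := by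
  obtain ⟨P, ⟨hcard, hnonempty, hdisj, hcoverall, hconn⟩, hsat⟩ := hgerry
  choose dist hdistP hdistM using hcoverall
  set R := dist V2.root with hRdef
  have hRP : R ∈ P := hdistP _
  have hrootR : V2.root ∈ R := hdistM _
  have huniq : ∀ {D D' : Finset (V2 n m d)}, D ∈ P → D' ∈ P →
      ∀ {x : V2 n m d}, x ∈ D → x ∈ D' → D = D' := by
    intro D D' hD hD' x hx hx'
    by_contra hne'
    exact (Finset.disjoint_left.mp (hdisj D hD D' hD' hne')) hx hx'
  have hDR : ∀ D ∈ P, V2.root ∈ D → D = R := fun D hD hx => huniq hD hRP hx hrootR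
  have hbranch : ∀ D ∈ P, V2.root ∉ D → ∀ x ∈ D, ∀ y ∈ D, beta att x = beta att y := by
    intro D hD hroot x hx y hy
    have hreach := (hconn D hD).preconnected ⟨x, by simpa using hx⟩ ⟨y, by simpa using hy⟩
    exact beta_const_of_reachable (by simpa using hroot) hreach
  have hW'R : ∀ i : Fin d, V2.w' i ∈ R → V2.w i ∈ R := fun i h =>
    w_mem_of_w'_mem (hconn R hRP) hrootR h
  set A := Finset.univ.filter (fun i : Fin d => V2.w i ∉ R) with hAdef
  set a := A.card with hadef
  have hpair : ∀ D ∈ P, V2.root ∉ D → ∀ i : Fin d,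
      (V2.w i ∈ D ∨ V2.w' i ∈ D) → D ⊆ {V2.w i, V2.w' i} := by
    intro D hD hroot i hi x hx
    have hb : beta att x = some (Sum.inl i) := by
      rcases hi with hi | hi
      · exact (hbranch D hD hroot x hx _ hi).trans (by simp [beta])
      · exact (hbranch D hD hroot x hx _ hi).trans (by simp [beta])
    rcases beta_inl_cases att hb with h | h <;> simp [h]
  set B := Finset.univ.filter (fun i : Fin d => V2.w' i ∉ R) with hBdef
  have hAB : A ⊆ B := by
    intro i hi
    simp only [hAdef, hBdef, Finset.mem_filter, Finset.mem_univ, true_and] at *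
    exact fun h => hi (hW'R i h)
  have hrootD' : ∀ i ∈ B, V2.root ∉ dist (V2.w' i) := by
    intro i hi hroot
    have heq := hDR _ (hdistP (V2.w' i)) hroot
    have hmem := hdistM (V2.w' i)
    rw [heq] at hmem
    simp only [hBdef, Finset.mem_filter, Finset.mem_univ, true_and] at hi
    exact hi hmem
  have hD'pair : ∀ i ∈ B, dist (V2.w' i) ⊆ {V2.w i, V2.w' i} := fun i hi =>
    hpair _ (hdistP _) (hrootD' i hi) i (Or.inr (hdistM _))
  have hLq : B.card ≤ (P.filter fun D => leadsIn chi2 C2.q D).card := by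
    apply Finset.card_le_card_of_injOn (fun i => dist (V2.w' i))
    · intro i hi
      exact Finset.mem_filter.mpr ⟨hdistP _, leads_pair (hD'pair i hi) (hdistM _)⟩
    · intro i hi i' hi' heq
      have heq' : dist (V2.w' i) = dist (V2.w' i') := heq
      have hm : V2.w' i' ∈ dist (V2.w' i) := by rw [heq']; exact hdistM _
      have := hD'pair i (Finset.mem_coe.mp hi) hm
      simp only [Finset.mem_insert, Finset.mem_singleton] at this
      rcases this with h | h
      · exact absurd h (by simp)
      · simpa using h.symm
  set T := insert R (A.image (fun i => ({V2.w i} : Finset (V2 n m d)))) with hTdef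
  have hq_ne_p : (C2.q : C2 n m) ≠ C2.p := by simp
  have hwinsub : (P.filter fun D => winsIn chi2 C2.p D) ⊆ T := by
    intro D hD
    obtain ⟨hDP, hwin⟩ := Finset.mem_filter.mp hD
    rw [winsIn_iff] at hwin
    have hple : 0 < cnt chi2 C2.p D := by
      have := hwin C2.q hq_ne_p
      omega
    obtain ⟨x, hxD, hxp⟩ := exists_of_cnt_pos chi2 hple
    rcases chi2_p_cases hxp with rfl | ⟨i, rfl⟩
    · exact Finset.mem_insert.mpr (Or.inl (hDR D hDP hxD))
    · by_cases hroot : V2.root ∈ D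
      · exact Finset.mem_insert.mpr (Or.inl (hDR D hDP hroot))
      · have hsub := hpair D hDP hroot i (Or.inl hxD)
        have hiA : i ∈ A := by
          simp only [hAdef, Finset.mem_filter, Finset.mem_univ, true_and]
          intro hwR
          exact hroot ((huniq hDP hRP hxD hwR) ▸ hrootR)
        have hw'notD : V2.w' i ∉ D := by
          intro hw'
          have h1 : cnt chi2 C2.q D ≥ 1 := one_le_cnt chi2 hw' rfl
          have h2 : cnt chi2 C2.p D ≤ ({V2.w i} : Finset (V2 n m d)).card := by
            apply cnt_le_card
            intro y hy hyc
            rcases Finset.mem_insert.mp (hsub hy) with rfl | hy1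
            · exact Finset.mem_singleton_self _
            · rw [Finset.mem_singleton] at hy1; subst hy1
              simp [chi2] at hyc
          have h3 := hwin C2.q hq_ne_p
          simp only [Finset.card_singleton] at h2
          omega
        have hDeq : D = {V2.w i} := by
          apply Finset.Subset.antisymm
          · intro y hy
            rcases Finset.mem_insert.mp (hsub hy) with rfl | hy1
            · exact Finset.mem_singleton_self _
            · rw [Finset.mem_singleton] at hy1; subst hy1
              exact absurd hy hw'notD
          · simpa using hxD
        exact Finset.mem_insert.mpr (Or.inr (Finset.mem_image.mpr ⟨i, hiA, hDeq.symm⟩))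
  have hTcard : T.card ≤ a + 1 := by
    have h1 := Finset.card_insert_le R (A.image (fun i => ({V2.w i} : Finset (V2 n m d))))
    have h2 := Finset.card_image_le (s := A) (f := fun i => ({V2.w i} : Finset (V2 n m d)))
    rw [hTdef]
    omega
  have hsatq := hsat C2.q hq_ne_p
  set W := (P.filter fun D => winsIn chi2 C2.p D).card with hWdef
  have hWle : W ≤ a + 1 := le_trans (Finset.card_le_card hwinsub) hTcard
  have haB : a ≤ B.card := Finset.card_le_card hAB
  have hBW : B.card < W := lt_of_le_of_lt hLq hsatq
  have hWeq : W = a + 1 := by omega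
  have hBa : B.card = a := by omega
  have hfilT : (P.filter fun D => winsIn chi2 C2.p D) = T :=
    Finset.eq_of_subset_of_card_le hwinsub (by omega)
  have hwinR : winsIn chi2 C2.p R := by
    have hmem : R ∈ P.filter fun D => winsIn chi2 C2.p D := by
      rw [hfilT]; exact Finset.mem_insert_self _ _
    exact (Finset.mem_filter.mp hmem).2
  have hwA : ∀ i ∈ A, ({V2.w i} : Finset (V2 n m d)) ∈ P := by
    intro i hi
    have hmem : ({V2.w i} : Finset (V2 n m d)) ∈ T :=
      Finset.mem_insert.mpr (Or.inr (Finset.mem_image_of_mem _ hi))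
    rw [← hfilT] at hmem
    exact (Finset.mem_filter.mp hmem).1
  have hAeqB : A = B := Finset.eq_of_subset_of_card_le hAB (by omega)
  have hw'A : ∀ i ∈ A, ({V2.w' i} : Finset (V2 n m d)) ∈ P := by
    intro i hi
    have hiB : i ∈ B := hAB hi
    have hsub := hD'pair i hiB
    have hwni : V2.w i ∉ dist (V2.w' i) := by
      intro hmem
      have heq := huniq (hdistP (V2.w' i)) (hwA i hi) hmem (Finset.mem_singleton_self _)
      have h2 := hdistM (V2.w' i)
      rw [heq] at h2
      simp at h2
    have heq : dist (V2.w' i) = {V2.w' i} := by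
      apply Finset.Subset.antisymm
      · intro y hy
        rcases Finset.mem_insert.mp (hsub hy) with rfl | hy1
        · exact absurd hy hwni
        · simpa using hy1
      · simp only [Finset.singleton_subset_iff]
        exact hdistM _
    rw [← heq]
    exact hdistP _
  have ha1 : 1 ≤ a := by
    by_contra hcon
    have ha0 : A = ∅ := Finset.card_eq_zero.mp (by omega)
    have hallw : ∀ i : Fin d, V2.w i ∈ R := by
      intro i
      by_contra h'
      have : i ∈ A := by
        simp only [hAdef, Finset.mem_filter, Finset.mem_univ, true_and]; exact h'
      rw [ha0] at this; simp at this
    have hallw' : ∀ i : Fin d, V2.w' i ∈ R := by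
      intro i
      by_contra h'
      have : i ∈ B := by
        simp only [hBdef, Finset.mem_filter, Finset.mem_univ, true_and]; exact h'
      rw [← hAeqB, ha0] at this; simp at this
    have herase : (P.erase R).Nonempty := by
      apply Finset.card_pos.mp
      rw [Finset.card_erase_of_mem hRP, hcard]
      omega
    obtain ⟨D, hDer⟩ := herase
    have hDP := Finset.mem_of_mem_erase hDer
    have hDne : D ≠ R := Finset.ne_of_mem_erase hDer
    obtain ⟨x0, hx0⟩ := hnonempty D hDP
    have hnop : ∀ x ∈ D, chi2 x ≠ C2.p := by
      intro x hx hp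
      rcases chi2_p_cases hp with rfl | ⟨i, rfl⟩
      · exact hDne (hDR D hDP hx)
      · exact hDne (huniq hDP hRP hx (hallw i))
    obtain ⟨c0, hc0x, hmax⟩ := Finset.exists_max_image (D.image chi2)
      (fun c => cnt chi2 c D) (Finset.image_nonempty.mpr ⟨x0, hx0⟩)
    have hlead : leadsIn chi2 c0 D := by
      rw [leadsIn_iff]
      intro c'
      by_cases hc' : c' ∈ D.image chi2
      · exact hmax c' hc'
      · have hz : cnt chi2 c' D = 0 := by
          apply cnt_eq_zero
          intro y hy hyc
          exact hc' (Finset.mem_image.mpr ⟨y, hy, hyc⟩)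
        omega
    have hc0pos : 1 ≤ cnt chi2 c0 D := by
      obtain ⟨y, hy, hyc⟩ := Finset.mem_image.mp hc0x
      exact one_le_cnt chi2 hy hyc
    have hc0p : c0 ≠ C2.p := by
      rintro rfl
      obtain ⟨y, hy, hyc⟩ := Finset.mem_image.mp hc0x
      exact hnop y hy hyc
    have hlt := hsat c0 hc0p
    have h1 : 1 ≤ (P.filter fun D' => leadsIn chi2 c0 D').card :=
      Finset.card_pos.mpr ⟨D, Finset.mem_filter.mpr ⟨hDP, hlead⟩⟩
    omega
  have hcov : ∀ j : Fin n, ∃ l : Fin d, V2.v j l ∉ R := by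
    intro j
    by_contra hcon
    push_neg at hcon
    have hda : d ≤ cnt chi2 (C2.a j) R := by
      have hinj := card_le_cnt chi2 (Finset.univ : Finset (Fin d)) (fun l => V2.v j l)
        (fun l _ => ⟨hcon l, rfl⟩) (fun l _ l' _ he => by simpa using he)
      simpa using hinj
    have hpc : cnt chi2 C2.p R ≤
        1 + (Finset.univ.filter fun i : Fin d => V2.w i ∈ R).card := by
      have h2 : cnt chi2 C2.p R ≤
          (insert (V2.root : V2 n m d)
            ((Finset.univ.filter fun i : Fin d => V2.w i ∈ R).image
              (fun i => (V2.w i : V2 n m d)))).card := by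
        apply cnt_le_card
        intro x hx hxp
        rcases chi2_p_cases hxp with rfl | ⟨i, rfl⟩
        · exact Finset.mem_insert_self _ _
        · exact Finset.mem_insert.mpr (Or.inr (Finset.mem_image.mpr
            ⟨i, Finset.mem_filter.mpr ⟨Finset.mem_univ _, hx⟩, rfl⟩))
      have h3 := Finset.card_insert_le (V2.root : V2 n m d)
        ((Finset.univ.filter fun i : Fin d => V2.w i ∈ R).image
          (fun i => (V2.w i : V2 n m d)))
      have h4 := Finset.card_image_le (s := Finset.univ.filter fun i : Fin d => V2.w i ∈ R)
        (f := fun i => (V2.w i : V2 n m d))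
      omega
    have huc : (Finset.univ : Finset (Fin d)).card = d := by simp
    have hAcard : (Finset.univ.filter fun i : Fin d => V2.w i ∈ R).card + a = d := by
      have h5 : (Finset.univ.filter fun i : Fin d => V2.w i ∈ R).card +
          (Finset.univ.filter fun i : Fin d => ¬ V2.w i ∈ R).card =
          (Finset.univ : Finset (Fin d)).card :=
        Finset.card_filter_add_card_filter_not _
      rw [huc] at h5
      rw [hadef, hAdef]
      exact h5
    have hja : (C2.a j : C2 n m) ≠ C2.p := by simp
    have hwj : cnt chi2 (C2.a j) R < cnt chi2 C2.p R := ((winsIn_iff _ _ _).mp hwinR) _ hja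
    omega
  choose lj hlj using hcov
  refine ⟨Finset.univ.image (fun j : Fin n => att j (lj j)), ?_, ?_⟩
  · -- cardinality bound
    set X := Finset.univ.image (fun j : Fin n => att j (lj j)) with hXdef
    set WD := insert R ((A.image fun i => ({V2.w i} : Finset (V2 n m d))) ∪
      (A.image fun i => ({V2.w' i} : Finset (V2 n m d)))) with hWDdef
    have hWDsub : WD ⊆ P := by
      intro D hD
      rcases Finset.mem_insert.mp hD with rfl | hD2
      · exact hRP
      · rcases Finset.mem_union.mp hD2 with hD3 | hD3 <;>
          obtain ⟨i, hi, rfl⟩ := Finset.mem_image.mp hD3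
        · exact hwA i hi
        · exact hw'A i hi
    have hWDcard : WD.card = 1 + 2 * a := by
      have hRnot : R ∉ (A.image fun i => ({V2.w i} : Finset (V2 n m d))) ∪
          (A.image fun i => ({V2.w' i} : Finset (V2 n m d))) := by
        intro hmem
        rcases Finset.mem_union.mp hmem with h | h <;>
          obtain ⟨i, hi, heq⟩ := Finset.mem_image.mp h <;>
          · rw [← heq] at hrootR; simp at hrootR
      have hdisj2 : Disjoint (A.image fun i => ({V2.w i} : Finset (V2 n m d)))
          (A.image fun i => ({V2.w' i} : Finset (V2 n m d))) := by
        rw [Finset.disjoint_left]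
        intro D h1 h2
        obtain ⟨i, hi, heq⟩ := Finset.mem_image.mp h1
        obtain ⟨i', hi', heq'⟩ := Finset.mem_image.mp h2
        have hss : ({V2.w i} : Finset (V2 n m d)) = {V2.w' i'} := heq.trans heq'.symm
        have hmm : V2.w i ∈ ({V2.w' i'} : Finset (V2 n m d)) := by
          rw [← hss]; exact Finset.mem_singleton_self _
        simp at hmm
      have hinj1 : Function.Injective (fun i : Fin d => ({V2.w i} : Finset (V2 n m d))) := by
        intro x y h
        have := Finset.singleton_injective h
        simpa using this
      have hinj2 : Function.Injective (fun i : Fin d => ({V2.w' i} : Finset (V2 n m d))) := by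
        intro x y h
        have := Finset.singleton_injective h
        simpa using this
      rw [hWDdef, Finset.card_insert_of_notMem hRnot, Finset.card_union_of_disjoint hdisj2,
        Finset.card_image_of_injective _ hinj1, Finset.card_image_of_injective _ hinj2]
      omega
    classical
    set psi : Fin m → Finset (V2 n m d) := fun i =>
      if h : ∃ j : Fin n, att j (lj j) = i then dist (V2.v h.choose (lj h.choose)) else ∅
      with hpsidef
    have key : ∀ i ∈ X, ∃ j : Fin n, att j (lj j) = i ∧ psi i = dist (V2.v j (lj j)) := by
      intro i hi
      have hex : ∃ j : Fin n, att j (lj j) = i := by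
        obtain ⟨j, _, hj⟩ := Finset.mem_image.mp hi
        exact ⟨j, hj⟩
      exact ⟨hex.choose, hex.choose_spec, by rw [hpsidef]; simp only [dif_pos hex]⟩
    have hpsiP : ∀ i ∈ X, psi i ∈ P ∧ ∃ j : Fin n, att j (lj j) = i ∧ V2.v j (lj j) ∈ psi i := by
      intro i hi
      obtain ⟨j, hji, hψ⟩ := key i hi
      exact ⟨hψ ▸ hdistP _, j, hji, hψ ▸ hdistM _⟩
    have hpsiroot : ∀ i ∈ X, V2.root ∉ psi i := by
      intro i hi hr
      obtain ⟨hP2, j, hji, hv⟩ := hpsiP i hi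
      have := hDR _ hP2 hr
      rw [this] at hv
      exact hlj j hv
    have hXle : X.card ≤ (P \ WD).card := by
      apply Finset.card_le_card_of_injOn psi
      · intro i hi
        obtain ⟨hP2, j, hji, hv⟩ := hpsiP i hi
        apply Finset.mem_sdiff.mpr
        refine ⟨hP2, ?_⟩
        intro hmem
        rcases Finset.mem_insert.mp hmem with heq | h2
        · rw [heq] at hv; exact hlj j hv
        · rcases Finset.mem_union.mp h2 with h3 | h3 <;>
            obtain ⟨k, hk, heq⟩ := Finset.mem_image.mp h3 <;>
            · rw [← heq] at hv; simp at hv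
      · intro i hi i' hi' heq
        obtain ⟨hP2, j, hji, hv⟩ := hpsiP i (Finset.mem_coe.mp hi)
        obtain ⟨hP2', j', hji', hv'⟩ := hpsiP i' (Finset.mem_coe.mp hi')
        rw [← heq] at hv'
        have hb := hbranch (psi i) hP2 (hpsiroot i (Finset.mem_coe.mp hi))
          _ hv _ hv'
        simp only [beta, Option.some.injEq, Sum.inr.injEq] at hb
        rw [← hji, ← hji', hb]
    have hsd : (P \ WD).card = (t + 3) - (1 + 2 * a) := by
      rw [Finset.card_sdiff_of_subset hWDsub, hcard, hWDcard]
    omega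
  · intro j
    exact ⟨att j (lj j), Finset.mem_image_of_mem _ (Finset.mem_univ j), hattmem j (lj j)⟩
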